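/- For every i ∈ I and z ∈ ℚ, the exponential exp(z·e_i) = Σ_{k≥0} z^k e_i^k / k! is a well-defined linear automorphism of V₁ (the sum is finite since e_i⁴ = 0), and it acts on the basis by: exp(z·e_i) X_α = Σ_{0 ≤ k ≤ p_{i,α}} ((q_{i,α}+k)!/(q_{i,α}!·k!))·z^k·X_{α+kα_i} for every root α ≠ −α_i (with the convention p_{i,α_i} = q_{i,α_i} = 0); exp(z·e_i) X_{−α_i} = X_{−α_i} + z·t_i + z²·X_{α_i}; and exp(z·e_i) t_j = t_j + |⟨α_j∨, α_i⟩|·z·X_{α_i} for every j ∈ I. Analogously, exp(z·f_i) X_α = Σ_{0 ≤ k ≤ q_{i,α}} ((p_{i,α}+k)!/(p_{i,α}!·k!))·z^k·X_{α−kα_i} for every root α ≠ α_i (with the convention p_{i,−α_i} = q_{i,−α_i} = 0); exp(z·f_i) X_{α_i} = X_{α_i} + z·t_i + z²·X_{−α_i}; and exp(z·f_i) t_j = t_j + |⟨α_j∨, α_i⟩|·z·X_{−α_i} for every j ∈ I. -/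

import Mathlib

open scoped RealInnerProductSpace

/-- A finite, reduced, irreducible, crystallographic root system `R` spanning a
finite-dimensional real inner product space `E`, together with a base of simple
roots indexed by `I`, the integral Cartan pairing `pair`, and for each simple
root `αᵢ` and each root `α` not proportional to `αᵢ` the chain lengths
`p i α`, `q i α` (largest `n ≥ 0` with `α + n αᵢ`, resp. `α - n αᵢ`, a root). -/
structure RootSystemData (E : Type) [NormedAddCommGroup E] [InnerProductSpace ℝ E]
    [FiniteDimensional ℝ E] (I : Type) [Fintype I] : Type where
  R : Set E
  finite : R.Finite
  zero_not_mem : (0 : E) ∉ R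
  spans : Submodule.span ℝ R = ⊤
  neg_mem : ∀ α ∈ R, -α ∈ R
  reduced : ∀ α ∈ R, ∀ r : ℝ, r • α ∈ R → r = 1 ∨ r = -1
  pair : E → E → ℤ
  pair_def : ∀ α ∈ R, ∀ β ∈ R, (pair α β : ℝ) * ⟪α, α⟫ = 2 * ⟪α, β⟫
  reflect_mem : ∀ α ∈ R, ∀ β ∈ R, β - (pair α β : ℝ) • α ∈ R
  irreducible : ∀ R₁ R₂ : Set E, R = R₁ ∪ R₂ →
    (∀ α ∈ R₁, ∀ β ∈ R₂, ⟪α, β⟫ = 0) → R₁ = ∅ ∨ R₂ = ∅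
  simple : I → E
  simple_mem : ∀ i, simple i ∈ R
  simple_indep : LinearIndependent ℝ simple
  simple_gen : ∀ α ∈ R,
    (∃ c : I → ℕ, α = ∑ i, (c i : ℝ) • simple i) ∨
    (∃ c : I → ℕ, α = -(∑ i, (c i : ℝ) • simple i))
  p : I → E → ℕ
  q : I → E → ℕ
  p_mem : ∀ i, ∀ α ∈ R, (∀ r : ℝ, α ≠ r • simple i) →
    ∀ k : ℕ, k ≤ p i α → α + (k : ℝ) • simple i ∈ R
  p_max : ∀ i, ∀ α ∈ R, (∀ r : ℝ, α ≠ r • simple i) →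
    α + ((p i α : ℝ) + 1) • simple i ∉ R
  q_mem : ∀ i, ∀ α ∈ R, (∀ r : ℝ, α ≠ r • simple i) →
    ∀ k : ℕ, k ≤ q i α → α - (k : ℝ) • simple i ∈ R
  q_max : ∀ i, ∀ α ∈ R, (∀ r : ℝ, α ≠ r • simple i) →
    α - ((q i α : ℝ) + 1) • simple i ∉ R

noncomputable section

variable {E : Type} [NormedAddCommGroup E] [InnerProductSpace ℝ E]
  [FiniteDimensional ℝ E] {I : Type} [Fintype I]

/-- The `ℚ`-vector space `V₁` with basis `{X_α : α ∈ R} ∪ {t_i : i ∈ I}`. -/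
abbrev V1 (D : RootSystemData E I) : Type := ({x : E // x ∈ D.R} ⊕ I) →₀ ℚ

/-- The basis vector `X_α` of `V₁`, for a root `α`. -/
def X1 (D : RootSystemData E I) (a : {x : E // x ∈ D.R}) : V1 D :=
  Finsupp.single (Sum.inl a) 1

/-- The basis vector `t_j` of `V₁`, for `j ∈ I`. -/
def t1 (D : RootSystemData E I) (j : I) : V1 D :=
  Finsupp.single (Sum.inr j) 1

open Classical in
/-- The operator `e_i` on `V₁`: `e_i X_α = (q_{i,α}+1) X_{α+αᵢ}` if `α+αᵢ ∈ R`,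
`e_i X_{-αᵢ} = tᵢ`, `e_i X_α = 0` otherwise, and `e_i t_j = |⟨αⱼ∨,αᵢ⟩| X_{αᵢ}`. -/
def eop (D : RootSystemData E I) (i : I) : V1 D →ₗ[ℚ] V1 D :=
  Finsupp.lift (V1 D) ℚ _ fun b =>
    match b with
    | Sum.inl a =>
        if h : (a : E) + D.simple i ∈ D.R then
          ((D.q i (a : E) : ℚ) + 1) • X1 D ⟨(a : E) + D.simple i, h⟩
        else if (a : E) = -(D.simple i) then t1 D i
        else 0
    | Sum.inr j =>
        ((|D.pair (D.simple j) (D.simple i)| : ℤ) : ℚ) •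
          X1 D ⟨D.simple i, D.simple_mem i⟩

open Classical in
/-- The operator `f_i` on `V₁`: `f_i X_α = (p_{i,α}+1) X_{α-αᵢ}` if `α-αᵢ ∈ R`,
`f_i X_{αᵢ} = tᵢ`, `f_i X_α = 0` otherwise, and `f_i t_j = |⟨αⱼ∨,αᵢ⟩| X_{-αᵢ}`. -/
def fop (D : RootSystemData E I) (i : I) : V1 D →ₗ[ℚ] V1 D :=
  Finsupp.lift (V1 D) ℚ _ fun b =>
    match b with
    | Sum.inl a =>
        if h : (a : E) - D.simple i ∈ D.R then
          ((D.p i (a : E) : ℚ) + 1) • X1 D ⟨(a : E) - D.simple i, h⟩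
        else if (a : E) = D.simple i then t1 D i
        else 0
    | Sum.inr j =>
        ((|D.pair (D.simple j) (D.simple i)| : ℤ) : ℚ) •
          X1 D ⟨-(D.simple i), D.neg_mem (D.simple i) (D.simple_mem i)⟩

/-- The exponential `exp(z·e_i) = ∑_{k≥0} z^k e_i^k / k!` on `V₁`; the sum is
finite since `e_i⁴ = 0`. -/
def expE (D : RootSystemData E I) (i : I) (z : ℚ) : V1 D →ₗ[ℚ] V1 D :=
  ∑ k ∈ Finset.range 4, (z ^ k / (Nat.factorial k : ℚ)) • eop D i ^ k

/-- The exponential `exp(z·f_i) = ∑_{k≥0} z^k f_i^k / k!` on `V₁`; the sum is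
finite since `f_i⁴ = 0`. -/
def expF (D : RootSystemData E I) (i : I) (z : ℚ) : V1 D →ₗ[ℚ] V1 D :=
  ∑ k ∈ Finset.range 4, (z ^ k / (Nat.factorial k : ℚ)) • fop D i ^ k
open Classical

namespace RootSystemData

variable (D : RootSystemData E I) (i : I)

lemma X1_congr {x y : E} (hx : x ∈ D.R) (hy : y ∈ D.R) (h : x = y) :
    X1 D ⟨x, hx⟩ = X1 D ⟨y, hy⟩ := by subst h; rfl

lemma eop_X1 (a : {x : E // x ∈ D.R}) :
    eop D i (X1 D a) =
      if h : (a : E) + D.simple i ∈ D.R then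
        ((D.q i (a : E) : ℚ) + 1) • X1 D ⟨(a : E) + D.simple i, h⟩
      else if (a : E) = -(D.simple i) then t1 D i
      else 0 := by
  simp [eop, X1, Finsupp.lift_apply, Finsupp.sum_single_index]

lemma eop_t1 (j : I) :
    eop D i (t1 D j) =
      ((|D.pair (D.simple j) (D.simple i)| : ℤ) : ℚ) •
        X1 D ⟨D.simple i, D.simple_mem i⟩ := by
  simp [eop, t1, Finsupp.lift_apply, Finsupp.sum_single_index]

end RootSystemData
namespace RootSystemData

section Facts
variable (D : RootSystemData E I) (i : I)

lemma mem_ne_zero {α : E} (h : α ∈ D.R) : α ≠ 0 := fun e => D.zero_not_mem (e ▸ h)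

lemma inner_pos {α : E} (h : α ∈ D.R) : (0:ℝ) < ⟪α, α⟫ :=
  lt_of_le_of_ne real_inner_self_nonneg (Ne.symm (inner_self_ne_zero.mpr (D.mem_ne_zero h)))

lemma simple_ne_zero : D.simple i ≠ 0 := D.mem_ne_zero (D.simple_mem i)

lemma inner_simple_pos : (0:ℝ) < ⟪D.simple i, D.simple i⟫ := D.inner_pos (D.simple_mem i)

lemma pair_simple_self : D.pair (D.simple i) (D.simple i) = 2 := by
  have h := D.pair_def _ (D.simple_mem i) _ (D.simple_mem i)
  have hp := D.inner_simple_pos i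
  have h2 : (D.pair (D.simple i) (D.simple i) : ℝ) = 2 := by
    have hne : ⟪D.simple i, D.simple i⟫ ≠ 0 := ne_of_gt hp
    exact mul_right_cancel₀ hne (by linarith [h] : (D.pair (D.simple i) (D.simple i) : ℝ) * ⟪D.simple i, D.simple i⟫ = 2 * ⟪D.simple i, D.simple i⟫)
  exact_mod_cast h2

lemma smul_simple_not_mem {r : ℝ} (h1 : r ≠ 1) (h2 : r ≠ -1) : r • D.simple i ∉ D.R := by
  intro hm
  rcases D.reduced _ (D.simple_mem i) r hm with h | h
  · exact h1 h
  · exact h2 h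

/-- If `β` and `β + αᵢ` are both roots then `β + αᵢ` is not proportional
to `αᵢ`. -/
lemma notProp_of_add_mem {β : E} (hβ : β ∈ D.R) (h : β + D.simple i ∈ D.R) :
    ∀ r : ℝ, β + D.simple i ≠ r • D.simple i := by
  intro r he
  rcases D.reduced _ (D.simple_mem i) r (he ▸ h) with h1 | h1
  · subst h1
    have : β = 0 := by
      rw [one_smul] at he
      linear_combination (norm := abel) he
    exact D.zero_not_mem (this ▸ hβ)
  · subst h1
    have hb : β = (-2 : ℝ) • D.simple i := by
      rw [neg_one_smul] at he
      have : β = -D.simple i - D.simple i := by linear_combination (norm := abel) he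
      rw [this]; module
    exact D.smul_simple_not_mem i (by norm_num) (by norm_num) (hb ▸ hβ)

/-- Strict Cauchy–Schwarz for a vector not proportional to `αᵢ`. -/
lemma strict_cs {γ : E} (hnp : ∀ r : ℝ, γ ≠ r • D.simple i) :
    ⟪D.simple i, γ⟫ ^ 2 < ⟪D.simple i, D.simple i⟫ * ⟪γ, γ⟫ := by
  have hs0 : D.simple i ≠ 0 := D.simple_ne_zero i
  have hsn : ‖D.simple i‖ ≠ 0 := norm_ne_zero_iff.mpr hs0
  have h1 : ⟪D.simple i, γ⟫ < ‖D.simple i‖ * ‖γ‖ := by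
    rw [inner_lt_norm_mul_iff_real]
    intro he
    refine hnp (‖γ‖ / ‖D.simple i‖) ?_
    rw [div_eq_inv_mul, mul_smul, he, inv_smul_smul₀ hsn]
  have h2 : ⟪D.simple i, -γ⟫ < ‖D.simple i‖ * ‖-γ‖ := by
    rw [inner_lt_norm_mul_iff_real]
    intro he
    rw [norm_neg] at he
    refine hnp (-(‖γ‖ / ‖D.simple i‖)) ?_
    rw [neg_smul, div_eq_inv_mul, mul_smul, he, inv_smul_smul₀ hsn, neg_neg]
  rw [inner_neg_right, norm_neg] at h2
  have habs : |⟪D.simple i, γ⟫| < ‖D.simple i‖ * ‖γ‖ := abs_lt.mpr ⟨by linarith, h1⟩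
  have hlt := mul_self_lt_mul_self (abs_nonneg _) habs
  calc ⟪D.simple i, γ⟫ ^ 2 = |⟪D.simple i, γ⟫| * |⟪D.simple i, γ⟫| := by
        rw [abs_mul_abs_self]; ring
    _ < (‖D.simple i‖ * ‖γ‖) * (‖D.simple i‖ * ‖γ‖) := hlt
    _ = ⟪D.simple i, D.simple i⟫ * ⟪γ, γ⟫ := by
        rw [real_inner_self_eq_norm_mul_norm, real_inner_self_eq_norm_mul_norm]; ring

lemma pair_simple_bound {γ : E} (hγ : γ ∈ D.R) (hnp : ∀ r : ℝ, γ ≠ r • D.simple i) :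
    |D.pair (D.simple i) γ| ≤ 3 := by
  have hmd := D.pair_def _ (D.simple_mem i) γ hγ
  have hnd := D.pair_def γ hγ _ (D.simple_mem i)
  rw [real_inner_comm (D.simple i) γ] at hnd
  have hss := D.inner_simple_pos i
  have hγγ : (0:ℝ) < ⟪γ, γ⟫ := D.inner_pos hγ
  have hcs := D.strict_cs i hnp
  set m : ℤ := D.pair (D.simple i) γ
  set n : ℤ := D.pair γ (D.simple i)
  have hprod : (m:ℝ) * (n:ℝ) * (⟪D.simple i, D.simple i⟫ * ⟪γ, γ⟫)
      = 4 * ⟪D.simple i, γ⟫ ^ 2 := by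
    linear_combination ((n:ℝ) * ⟪γ, γ⟫) * hmd + (2 * ⟪D.simple i, γ⟫) * hnd
  have hmn4 : (m:ℝ) * (n:ℝ) < 4 := by nlinarith [mul_pos hss hγγ]
  have hmn0 : (0:ℝ) ≤ (m:ℝ) * (n:ℝ) := by nlinarith [sq_nonneg (⟪D.simple i, γ⟫), mul_pos hss hγγ]
  have h3 : m * n ≤ 3 := by
    have : (m:ℝ) * (n:ℝ) ≤ 3 := by
      have : ((m*n : ℤ):ℝ) < 4 := by push_cast; linarith
      have h4 : (m*n : ℤ) < 4 := by exact_mod_cast this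
      have : (m*n : ℤ) ≤ 3 := by omega
      exact_mod_cast this
    exact_mod_cast this
  have h0 : 0 ≤ m * n := by exact_mod_cast (by push_cast; linarith : ((m*n:ℤ):ℝ) ≥ 0)
  by_cases hm0 : m = 0
  · simp [hm0]
  · have hn0 : n ≠ 0 := by
      intro h
      apply hm0
      rw [h] at hnd
      push_cast at hnd
      have hz : ⟪D.simple i, γ⟫ = 0 := by linarith
      rw [hz] at hmd
      have : (m:ℝ) = 0 := by
        have := mul_eq_zero.mp (by linarith [hmd] : (m:ℝ) * ⟪D.simple i, D.simple i⟫ = 0)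
        rcases this with h | h
        · exact h
        · exact absurd h (ne_of_gt hss)
      exact_mod_cast this
    have h1n : 1 ≤ |n| := Int.one_le_abs hn0
    calc |m| = |m| * 1 := (mul_one _).symm
      _ ≤ |m| * |n| := mul_le_mul_of_nonneg_left h1n (abs_nonneg m)
      _ = |m * n| := (abs_mul m n).symm
      _ = m * n := abs_of_nonneg h0
      _ ≤ 3 := h3

end Facts
end RootSystemData
namespace RootSystemData

section Chains
variable (D : RootSystemData E I) (i : I)

lemma p_unique {α : E} (hα : α ∈ D.R) (hnp : ∀ r : ℝ, α ≠ r • D.simple i) (n : ℕ)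
    (hmem : ∀ k : ℕ, k ≤ n → α + (k : ℝ) • D.simple i ∈ D.R)
    (hmax : α + ((n : ℝ) + 1) • D.simple i ∉ D.R) : D.p i α = n := by
  rcases lt_trichotomy (D.p i α) n with h | h | h
  · exfalso
    apply D.p_max i α hα hnp
    have : ((D.p i α : ℝ) + 1) = ((D.p i α + 1 : ℕ) : ℝ) := by push_cast; ring
    rw [this]
    exact hmem _ (by omega)
  · exact h
  · exfalso
    apply hmax
    have : ((n : ℝ) + 1) = ((n + 1 : ℕ) : ℝ) := by push_cast; ring
    rw [this]
    exact D.p_mem i α hα hnp (n + 1) (by omega)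

lemma q_unique {α : E} (hα : α ∈ D.R) (hnp : ∀ r : ℝ, α ≠ r • D.simple i) (n : ℕ)
    (hmem : ∀ k : ℕ, k ≤ n → α - (k : ℝ) • D.simple i ∈ D.R)
    (hmax : α - ((n : ℝ) + 1) • D.simple i ∉ D.R) : D.q i α = n := by
  rcases lt_trichotomy (D.q i α) n with h | h | h
  · exfalso
    apply D.q_max i α hα hnp
    have : ((D.q i α : ℝ) + 1) = ((D.q i α + 1 : ℕ) : ℝ) := by push_cast; ring
    rw [this]
    exact hmem _ (by omega)
  · exact h
  · exfalso
    apply hmax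
    have : ((n : ℝ) + 1) = ((n + 1 : ℕ) : ℝ) := by push_cast; ring
    rw [this]
    exact D.q_mem i α hα hnp (n + 1) (by omega)

lemma p_pos {α : E} (hα : α ∈ D.R) (hnp : ∀ r : ℝ, α ≠ r • D.simple i)
    (h : α + D.simple i ∈ D.R) : 1 ≤ D.p i α := by
  by_contra hc
  have h0 : D.p i α = 0 := by omega
  apply D.p_max i α hα hnp
  rw [h0]
  convert h using 2
  norm_num

lemma q_add {α : E} (hα : α ∈ D.R) (hnp : ∀ r : ℝ, α ≠ r • D.simple i)
    (h : α + D.simple i ∈ D.R) : D.q i (α + D.simple i) = D.q i α + 1 := by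
  refine D.q_unique i h (D.notProp_of_add_mem i hα h) (D.q i α + 1) ?_ ?_
  · intro k hk
    match k with
    | 0 => simpa using h
    | (j+1) =>
      have : α + D.simple i - ((j + 1 : ℕ) : ℝ) • D.simple i
          = α - (j : ℝ) • D.simple i := by push_cast; module
      rw [this]
      exact D.q_mem i α hα hnp j (by omega)
  · have : α + D.simple i - (((D.q i α + 1 : ℕ) : ℝ) + 1) • D.simple i
        = α - ((D.q i α : ℝ) + 1) • D.simple i := by push_cast; module
    rw [this]
    exact D.q_max i α hα hnp

lemma p_add {α : E} (hα : α ∈ D.R) (hnp : ∀ r : ℝ, α ≠ r • D.simple i)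
    (h : α + D.simple i ∈ D.R) : D.p i α = D.p i (α + D.simple i) + 1 := by
  obtain ⟨m, hm⟩ : ∃ m, D.p i α = m + 1 := ⟨D.p i α - 1, by have := D.p_pos i hα hnp h; omega⟩
  have hpm : D.p i (α + D.simple i) = m := by
    refine D.p_unique i h (D.notProp_of_add_mem i hα h) m ?_ ?_
    · intro k hk
      have : α + D.simple i + (k : ℝ) • D.simple i
          = α + ((k + 1 : ℕ) : ℝ) • D.simple i := by push_cast; module
      rw [this]
      exact D.p_mem i α hα hnp (k + 1) (by omega)
    · have : α + D.simple i + ((m : ℝ) + 1) • D.simple i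
          = α + ((D.p i α : ℝ) + 1) • D.simple i := by rw [hm]; push_cast; module
      rw [this]
      exact D.p_max i α hα hnp
  omega

lemma chain_facts {α : E} (hα : α ∈ D.R) (hnp : ∀ r : ℝ, α ≠ r • D.simple i) :
    ∀ k : ℕ, k ≤ D.p i α →
      (α + (k : ℝ) • D.simple i ∈ D.R) ∧
      (∀ r : ℝ, α + (k : ℝ) • D.simple i ≠ r • D.simple i) ∧
      D.q i (α + (k : ℝ) • D.simple i) = D.q i α + k ∧
      D.p i α = D.p i (α + (k : ℝ) • D.simple i) + k := by
  intro k
  induction k with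
  | zero => intro _; exact ⟨by simpa using hα, by simpa using hnp, by simp, by simp⟩
  | succ j ih =>
    intro hj
    obtain ⟨hmem, hnp', hq, hp⟩ := ih (by omega)
    have hcast : α + ((j + 1 : ℕ) : ℝ) • D.simple i
        = (α + (j : ℝ) • D.simple i) + D.simple i := by push_cast; module
    have hmem' : (α + (j : ℝ) • D.simple i) + D.simple i ∈ D.R := by
      rw [← hcast]; exact D.p_mem i α hα hnp (j + 1) hj
    refine ⟨by rw [hcast]; exact hmem', ?_, ?_, ?_⟩
    · rw [hcast]; exact D.notProp_of_add_mem i hmem hmem'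
    · rw [hcast, D.q_add i hmem hnp' hmem', hq]; omega
    · rw [hcast]
      have := D.p_add i hmem hnp' hmem'
      omega

lemma pair_shift {α : E} (hα : α ∈ D.R) (k : ℕ) (hk : α + (k : ℝ) • D.simple i ∈ D.R) :
    D.pair (D.simple i) (α + (k : ℝ) • D.simple i) = D.pair (D.simple i) α + 2 * k := by
  have h1 := D.pair_def _ (D.simple_mem i) α hα
  have h2 := D.pair_def _ (D.simple_mem i) _ hk
  have hss := D.inner_simple_pos i
  have hinner : ⟪D.simple i, α + (k : ℝ) • D.simple i⟫
      = ⟪D.simple i, α⟫ + (k : ℝ) * ⟪D.simple i, D.simple i⟫ := by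
    rw [inner_add_right, real_inner_smul_right]
  have : (D.pair (D.simple i) (α + (k : ℝ) • D.simple i) : ℝ)
      = (D.pair (D.simple i) α : ℝ) + 2 * k := by
    have hne : ⟪D.simple i, D.simple i⟫ ≠ 0 := ne_of_gt hss
    apply mul_right_cancel₀ hne
    rw [h2, hinner]
    ring_nf
    linarith [h1]
  exact_mod_cast this

lemma p_le_three {α : E} (hα : α ∈ D.R) (hnp : ∀ r : ℝ, α ≠ r • D.simple i) :
    D.p i α ≤ 3 := by
  by_contra hc
  have h4 : 4 ≤ D.p i α := by omega
  obtain ⟨hm4, hnp4, _, _⟩ := D.chain_facts i hα hnp 4 h4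
  have hb0 := D.pair_simple_bound i hα hnp
  have hb4 := D.pair_simple_bound i hm4 hnp4
  have hshift := D.pair_shift i hα 4 hm4
  rw [hshift] at hb4
  rw [abs_le] at hb0 hb4
  omega

end Chains
end RootSystemData
/-- descending-product coefficient `(q+k)!/q! = (q+k).choose k * k!`. -/
def ascc (q k : ℕ) : ℕ := (q + k).choose k * k.factorial

lemma ascc_zero (q : ℕ) : ascc q 0 = 1 := by simp [ascc]

lemma ascc_mul_fact (q k : ℕ) : ascc q k * q.factorial = (q + k).factorial := by
  have h := Nat.choose_mul_factorial_mul_factorial (Nat.le_add_left k q)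
  rw [Nat.add_sub_cancel] at h
  rw [ascc]
  exact h

lemma ascc_succ (q k : ℕ) : ascc q (k + 1) = ascc q k * (q + k + 1) := by
  have h1 := ascc_mul_fact q (k + 1)
  have h2 := ascc_mul_fact q k
  have h3 : (q + (k + 1)).factorial = (q + k + 1) * (q + k).factorial := by
    rw [show q + (k + 1) = (q + k) + 1 by omega, Nat.factorial_succ]
  have := Nat.factorial_pos q
  have : ascc q (k + 1) * q.factorial = (ascc q k * (q + k + 1)) * q.factorial := by
    rw [h1, h3, ← h2]; ring
  exact Nat.eq_of_mul_eq_mul_right (Nat.factorial_pos q) this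

lemma factdiv (q k : ℕ) :
    (q + k).factorial / (q.factorial * k.factorial) = (q + k).choose k := by
  rw [Nat.choose_eq_factorial_div_factorial (Nat.le_add_left k q), Nat.add_sub_cancel,
    mul_comm]

namespace RootSystemData

section Action
variable (D : RootSystemData E I) (i : I)

lemma eop_X_mem {α : E} (hα : α ∈ D.R) (h : α + D.simple i ∈ D.R) :
    eop D i (X1 D ⟨α, hα⟩) = ((D.q i α : ℚ) + 1) • X1 D ⟨α + D.simple i, h⟩ := by
  rw [eop_X1, dif_pos h]

lemma simple_ne_neg : D.simple i ≠ -D.simple i := by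
  intro h
  apply D.simple_ne_zero i
  have h2 : (2 : ℝ) • D.simple i = 0 := by
    rw [two_smul]; nth_rewrite 2 [h]; exact add_neg_cancel _
  rcases smul_eq_zero.mp h2 with h3 | h3
  · norm_num at h3
  · exact h3

lemma eop_X_simple : eop D i (X1 D ⟨D.simple i, D.simple_mem i⟩) = 0 := by
  rw [eop_X1]
  have hc : D.simple i + D.simple i ∉ D.R := by
    rw [← two_smul ℝ]
    exact D.smul_simple_not_mem i (by norm_num) (by norm_num)
  rw [dif_neg hc, if_neg (D.simple_ne_neg i)]

lemma eop_X_negsimple (hm : -D.simple i ∈ D.R) :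
    eop D i (X1 D ⟨-D.simple i, hm⟩) = t1 D i := by
  rw [eop_X1]
  have hc : -D.simple i + D.simple i ∉ D.R := by
    rw [neg_add_cancel]; exact D.zero_not_mem
  rw [dif_neg hc, if_pos rfl]

lemma epow_le {α : E} (hα : α ∈ D.R) (hnp : ∀ r : ℝ, α ≠ r • D.simple i) :
    ∀ k : ℕ, (hk : k ≤ D.p i α) →
      (eop D i ^ k) (X1 D ⟨α, hα⟩) =
        (ascc (D.q i α) k : ℚ) •
          X1 D ⟨α + (k : ℝ) • D.simple i, (D.chain_facts i hα hnp k hk).1⟩ := by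
  intro k
  induction k with
  | zero =>
    intro _
    rw [pow_zero, Module.End.one_apply, ascc_zero, Nat.cast_one, one_smul]
    exact D.X1_congr hα _ (by simp)
  | succ j ih =>
    intro hj
    obtain ⟨hβ, hβnp, hq, hp⟩ := D.chain_facts i hα hnp j (by omega)
    have hc : α + ((j + 1 : ℕ) : ℝ) • D.simple i
        = (α + (j : ℝ) • D.simple i) + D.simple i := by push_cast; module
    have hβs : (α + (j : ℝ) • D.simple i) + D.simple i ∈ D.R := by
      rw [← hc]; exact (D.chain_facts i hα hnp (j+1) hj).1
    rw [pow_succ', Module.End.mul_apply, ih (by omega), map_smul,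
      D.eop_X_mem i hβ hβs, hq]
    rw [D.X1_congr hβs (hc ▸ hβs) hc.symm]
    rw [smul_smul]
    congr 1
    have : (ascc (D.q i α) j : ℚ) * ((D.q i α + j : ℕ) + 1)
        = (ascc (D.q i α) (j + 1) : ℚ) := by
      rw [ascc_succ]
      push_cast
      ring
    rw [← this]

lemma epow_gt {α : E} (hα : α ∈ D.R) (hnp : ∀ r : ℝ, α ≠ r • D.simple i)
    (k : ℕ) (hk : D.p i α < k) : (eop D i ^ k) (X1 D ⟨α, hα⟩) = 0 := by
  obtain ⟨m, rfl⟩ : ∃ m, k = m + (D.p i α + 1) := ⟨k - (D.p i α + 1), by omega⟩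
  rw [pow_add, Module.End.mul_apply]
  suffices h : (eop D i ^ (D.p i α + 1)) (X1 D ⟨α, hα⟩) = 0 by rw [h, map_zero]
  obtain ⟨hβ, hβnp, hq, hp⟩ := D.chain_facts i hα hnp (D.p i α) le_rfl
  rw [pow_succ', Module.End.mul_apply, D.epow_le i hα hnp (D.p i α) le_rfl, map_smul]
  have h0 : eop D i (X1 D ⟨α + (D.p i α : ℝ) • D.simple i, hβ⟩) = 0 := by
    rw [eop_X1]
    have hc : (α + (D.p i α : ℝ) • D.simple i) + D.simple i ∉ D.R := by
      have he : (α + (D.p i α : ℝ) • D.simple i) + D.simple i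
          = α + ((D.p i α : ℝ) + 1) • D.simple i := by module
      rw [he]; exact D.p_max i α hα hnp
    rw [dif_neg hc, if_neg]
    intro he
    exact hβnp (-1) (by rw [neg_one_smul]; exact he)
  rw [h0, smul_zero]

lemma eop4 : eop D i ^ 4 = 0 := by
  apply Finsupp.lhom_ext
  intro b r
  have hsingle : (Finsupp.single b r : V1 D) = r • Finsupp.single b 1 := by
    rw [Finsupp.smul_single', mul_one]
  rw [hsingle, map_smul, map_smul]
  suffices h : (eop D i ^ 4) (Finsupp.single b 1) = 0 by
    rw [h, smul_zero]; simp
  cases b with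
  | inl a =>
    have hXa : (Finsupp.single (Sum.inl a) 1 : V1 D) = X1 D a := rfl
    rw [hXa]
    by_cases hnp : ∀ r : ℝ, (a : E) ≠ r • D.simple i
    · have h3 := D.p_le_three i a.2 hnp
      have := D.epow_gt i a.2 hnp 4 (by omega)
      simpa using this
    · push_neg at hnp
      obtain ⟨r, hr⟩ := hnp
      rcases D.reduced _ (D.simple_mem i) r (hr ▸ a.2) with h1 | h1
      · have ha : X1 D a = X1 D ⟨D.simple i, D.simple_mem i⟩ := by
          cases a with | mk v hv =>
          exact D.X1_congr hv (D.simple_mem i) (by rw [show v = r • D.simple i from hr, h1, one_smul])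
        rw [ha, show (4:ℕ) = 3 + 1 from rfl, pow_succ, Module.End.mul_apply,
          D.eop_X_simple i, map_zero]
      · have hm : -D.simple i ∈ D.R := D.neg_mem _ (D.simple_mem i)
        have ha : X1 D a = X1 D ⟨-D.simple i, hm⟩ := by
          cases a with | mk v hv =>
          exact D.X1_congr hv hm (by rw [show v = r • D.simple i from hr, h1, neg_one_smul])
        rw [ha, show (4:ℕ) = 3 + 1 from rfl, pow_succ, Module.End.mul_apply,
          D.eop_X_negsimple i hm, show (3:ℕ) = 2 + 1 from rfl, pow_succ,
          Module.End.mul_apply, D.eop_t1 i i, map_smul, show (2:ℕ) = 1 + 1 from rfl,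
          pow_succ, Module.End.mul_apply, pow_one, D.eop_X_simple i, map_zero,
          smul_zero]
  | inr j =>
    have ht : (Finsupp.single (Sum.inr j) 1 : V1 D) = t1 D j := rfl
    rw [ht, show (4:ℕ) = 3 + 1 from rfl, pow_succ, Module.End.mul_apply,
      D.eop_t1 i j, map_smul, show (3:ℕ) = 2 + 1 from rfl, pow_succ,
      Module.End.mul_apply, D.eop_X_simple i, map_zero, smul_zero]

end Action
end RootSystemData
namespace RootSystemData

section Exp
variable (D : RootSystemData E I) (i : I)

open Polynomial in
lemma expE_eq_aeval (z : ℚ) : expE D i z = Polynomial.aeval (eop D i)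
    (∑ k ∈ Finset.range 4, Polynomial.C (z ^ k / (Nat.factorial k : ℚ)) * Polynomial.X ^ k) := by
  rw [expE, map_sum]
  refine Finset.sum_congr rfl fun k _ => ?_
  rw [map_mul, Polynomial.aeval_C, map_pow, Polynomial.aeval_X,
    Algebra.algebraMap_eq_smul_one, smul_mul_assoc, one_mul]

lemma expE_mul_neg (z : ℚ) : expE D i z * expE D i (-z) = 1 := by
  have h4 := D.eop4 i
  have h5 : eop D i ^ 5 = 0 := by
    rw [show (5:ℕ) = 4 + 1 from rfl, pow_succ, h4, zero_mul]
  have h6 : eop D i ^ 6 = 0 := by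
    rw [show (6:ℕ) = 5 + 1 from rfl, pow_succ, h5, zero_mul]
  simp only [expE, Finset.sum_range_succ, Finset.sum_range_zero, zero_add]
  simp only [add_mul, mul_add, smul_mul_assoc, mul_smul_comm, smul_smul, ← pow_add]
  norm_num [h4, h5, h6, Nat.factorial]
  match_scalars <;> ring

lemma expE_bijective (z : ℚ) : Function.Bijective (expE D i z) := by
  have h1 := D.expE_mul_neg i z
  have h2 := D.expE_mul_neg i (-z)
  rw [neg_neg] at h2
  constructor
  · intro x y hxy
    have h3 : (expE D i (-z) * expE D i z) x = (expE D i (-z) * expE D i z) y := by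
      simp only [Module.End.mul_apply, hxy]
    rwa [h2, Module.End.one_apply, Module.End.one_apply] at h3
  · intro y
    exact ⟨expE D i (-z) y, by rw [← Module.End.mul_apply, h1, Module.End.one_apply]⟩

open Classical in
theorem expE_X_notProp (z : ℚ) {α : E} (hα : α ∈ D.R)
    (hnp : ∀ r : ℝ, α ≠ r • D.simple i) :
    expE D i z (X1 D ⟨α, hα⟩)
      = ∑ k ∈ Finset.range (D.p i α + 1),
          ((((D.q i α + k).factorial / ((D.q i α).factorial * k.factorial) : ℕ) : ℚ)
              * z ^ k) •
            (if h : α + (k : ℝ) • D.simple i ∈ D.R then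
              X1 D ⟨α + (k : ℝ) • D.simple i, h⟩ else 0) := by
  have hp3 := D.p_le_three i hα hnp
  rw [expE, LinearMap.sum_apply]
  have hsub : Finset.range (D.p i α + 1) ⊆ Finset.range 4 :=
    Finset.range_subset_range.mpr (by omega)
  have hz : ∀ k ∈ Finset.range 4, k ∉ Finset.range (D.p i α + 1) →
      ((z ^ k / (Nat.factorial k : ℚ)) • eop D i ^ k) (X1 D ⟨α, hα⟩) = 0 := by
    intro k _ hk
    rw [LinearMap.smul_apply, D.epow_gt i hα hnp k (by simp [Finset.mem_range] at hk; omega),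
      smul_zero]
  rw [← Finset.sum_subset hsub hz]
  refine Finset.sum_congr rfl fun k hk => ?_
  have hk' : k ≤ D.p i α := by simp [Finset.mem_range] at hk; omega
  rw [LinearMap.smul_apply, D.epow_le i hα hnp k hk',
    dif_pos (D.chain_facts i hα hnp k hk').1, smul_smul]
  congr 1
  rw [factdiv, ascc]
  have hfac : (k.factorial : ℚ) ≠ 0 := Nat.cast_ne_zero.mpr k.factorial_ne_zero
  push_cast
  field_simp

theorem expE_X_simple (z : ℚ) :
    expE D i z (X1 D ⟨D.simple i, D.simple_mem i⟩)
      = X1 D ⟨D.simple i, D.simple_mem i⟩ := by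
  have h0 := D.eop_X_simple i
  have e1 : (eop D i ^ 1) (X1 D ⟨D.simple i, D.simple_mem i⟩) = 0 := by
    rw [pow_one]; exact h0
  have e2 : (eop D i ^ 2) (X1 D ⟨D.simple i, D.simple_mem i⟩) = 0 := by
    rw [show (2:ℕ) = 1 + 1 from rfl, pow_succ, Module.End.mul_apply, h0, map_zero]
  have e3 : (eop D i ^ 3) (X1 D ⟨D.simple i, D.simple_mem i⟩) = 0 := by
    rw [show (3:ℕ) = 2 + 1 from rfl, pow_succ, Module.End.mul_apply, h0, map_zero]
  rw [expE, LinearMap.sum_apply]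
  simp only [LinearMap.smul_apply]
  rw [Finset.sum_range_succ, Finset.sum_range_succ, Finset.sum_range_succ,
    Finset.sum_range_succ, Finset.sum_range_zero, e1, e2, e3]
  simp [Nat.factorial]

theorem expE_X_negsimple (z : ℚ) :
    expE D i z (X1 D ⟨-D.simple i, D.neg_mem _ (D.simple_mem i)⟩)
      = X1 D ⟨-D.simple i, D.neg_mem _ (D.simple_mem i)⟩
        + z • t1 D i + z ^ 2 • X1 D ⟨D.simple i, D.simple_mem i⟩ := by
  have hm : -D.simple i ∈ D.R := D.neg_mem _ (D.simple_mem i)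
  have k1 := D.eop_X_negsimple i hm
  have k2 : eop D i (t1 D i) = (2 : ℚ) • X1 D ⟨D.simple i, D.simple_mem i⟩ := by
    rw [D.eop_t1 i i, D.pair_simple_self i]
    norm_num
  have k3 := D.eop_X_simple i
  have e1 : (eop D i ^ 1) (X1 D ⟨-D.simple i, hm⟩) = t1 D i := by
    rw [pow_one]; exact k1
  have e2 : (eop D i ^ 2) (X1 D ⟨-D.simple i, hm⟩)
      = (2 : ℚ) • X1 D ⟨D.simple i, D.simple_mem i⟩ := by
    rw [show (2:ℕ) = 1 + 1 from rfl, pow_succ, Module.End.mul_apply, k1, pow_one, k2]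
  have e3 : (eop D i ^ 3) (X1 D ⟨-D.simple i, hm⟩) = 0 := by
    rw [show (3:ℕ) = 2 + 1 from rfl, pow_succ', Module.End.mul_apply, e2, map_smul, k3,
      smul_zero]
  rw [expE, LinearMap.sum_apply]
  simp only [LinearMap.smul_apply]
  rw [Finset.sum_range_succ, Finset.sum_range_succ, Finset.sum_range_succ,
    Finset.sum_range_succ, Finset.sum_range_zero, e1, e2, e3]
  simp only [pow_zero, Module.End.one_apply, smul_zero, add_zero, zero_add, smul_smul]
  match_scalars <;> norm_num [Nat.factorial]

theorem expE_t1 (z : ℚ) (j : I) :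
    expE D i z (t1 D j)
      = t1 D j + (((|D.pair (D.simple j) (D.simple i)| : ℤ) : ℚ) * z) •
          X1 D ⟨D.simple i, D.simple_mem i⟩ := by
  have k1 := D.eop_t1 i j
  have k3 := D.eop_X_simple i
  have e1 : (eop D i ^ 1) (t1 D j)
      = ((|D.pair (D.simple j) (D.simple i)| : ℤ) : ℚ) • X1 D ⟨D.simple i, D.simple_mem i⟩ := by
    rw [pow_one]; exact k1
  have e2 : (eop D i ^ 2) (t1 D j) = 0 := by
    rw [show (2:ℕ) = 1 + 1 from rfl, pow_succ', Module.End.mul_apply, pow_one, k1,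
      map_smul, k3, smul_zero]
  have e3 : (eop D i ^ 3) (t1 D j) = 0 := by
    rw [show (3:ℕ) = 2 + 1 from rfl, pow_succ', Module.End.mul_apply, e2, map_zero]
  rw [expE, LinearMap.sum_apply]
  simp only [LinearMap.smul_apply]
  rw [Finset.sum_range_succ, Finset.sum_range_succ, Finset.sum_range_succ,
    Finset.sum_range_succ, Finset.sum_range_zero, e1, e2, e3]
  simp only [pow_zero, Module.End.one_apply, smul_zero, add_zero, zero_add, smul_smul]
  match_scalars <;> (norm_num [Nat.factorial]; try ring)

end Exp
end RootSystemData
open Classical in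
/-- The root system data with all simple roots negated and `p`, `q` swapped. -/
def negD (D : RootSystemData E I) : RootSystemData E I where
  R := D.R
  finite := D.finite
  zero_not_mem := D.zero_not_mem
  spans := D.spans
  neg_mem := D.neg_mem
  reduced := D.reduced
  pair := fun α β => D.pair (-α) (-β)
  pair_def := by
    intro α hα β hβ
    have h := D.pair_def (-α) (D.neg_mem α hα) (-β) (D.neg_mem β hβ)
    simpa using h
  reflect_mem := by
    intro α hα β hβ
    have h := D.reflect_mem (-α) (D.neg_mem α hα) (-β) (D.neg_mem β hβ)
    have h2 : -β - (D.pair (-α) (-β) : ℝ) • -α = -(β - (D.pair (-α) (-β) : ℝ) • α) := by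
      module
    rw [h2] at h
    have h3 := D.neg_mem _ h
    rwa [neg_neg] at h3
  irreducible := D.irreducible
  simple := fun j => -D.simple j
  simple_mem := fun j => D.neg_mem _ (D.simple_mem j)
  simple_indep := by
    have h := D.simple_indep.map' (LinearEquiv.neg ℝ).toLinearMap
      (LinearMap.ker_eq_bot_of_injective (LinearEquiv.neg ℝ).injective)
    exact h
  simple_gen := by
    intro α hα
    rcases D.simple_gen α hα with ⟨c, hc⟩ | ⟨c, hc⟩
    · right; exact ⟨c, by rw [hc]; simp⟩
    · left; exact ⟨c, by rw [hc]; simp⟩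
  p := D.q
  q := D.p
  p_mem := by
    intro i α hα hnp k hk
    have hnp' : ∀ r : ℝ, α ≠ r • D.simple i :=
      fun r h => hnp (-r) (by rw [h, neg_smul_neg])
    have h := D.q_mem i α hα hnp' k hk
    rwa [smul_neg, ← sub_eq_add_neg]
  p_max := by
    intro i α hα hnp
    have hnp' : ∀ r : ℝ, α ≠ r • D.simple i :=
      fun r h => hnp (-r) (by rw [h, neg_smul_neg])
    have h := D.q_max i α hα hnp'
    rwa [smul_neg, ← sub_eq_add_neg]
  q_mem := by
    intro i α hα hnp k hk
    have hnp' : ∀ r : ℝ, α ≠ r • D.simple i :=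
      fun r h => hnp (-r) (by rw [h, neg_smul_neg])
    have h := D.p_mem i α hα hnp' k hk
    rwa [smul_neg, sub_neg_eq_add]
  q_max := by
    intro i α hα hnp
    have hnp' : ∀ r : ℝ, α ≠ r • D.simple i :=
      fun r h => hnp (-r) (by rw [h, neg_smul_neg])
    have h := D.p_max i α hα hnp'
    rwa [smul_neg, sub_neg_eq_add]

namespace RootSystemData

variable (D : RootSystemData E I) (i : I)

lemma fop_X1 (a : {x : E // x ∈ D.R}) :
    fop D i (X1 D a) =
      if h : (a : E) - D.simple i ∈ D.R then
        ((D.p i (a : E) : ℚ) + 1) • X1 D ⟨(a : E) - D.simple i, h⟩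
      else if (a : E) = D.simple i then t1 D i
      else 0 := by
  simp [fop, X1, Finsupp.lift_apply, Finsupp.sum_single_index]

lemma fop_t1 (j : I) :
    fop D i (t1 D j) =
      ((|D.pair (D.simple j) (D.simple i)| : ℤ) : ℚ) •
        X1 D ⟨-(D.simple i), D.neg_mem _ (D.simple_mem i)⟩ := by
  simp [fop, t1, Finsupp.lift_apply, Finsupp.sum_single_index]

lemma fop_eq : fop D i = eop (negD D) i := by
  apply Finsupp.lhom_ext
  intro b r
  have hsingle : (Finsupp.single b r : V1 D) = r • Finsupp.single b 1 := by
    rw [Finsupp.smul_single', mul_one]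
  rw [hsingle, map_smul]
  refine Eq.trans ?_ (map_smul (eop (negD D) i) r (Finsupp.single b 1)).symm
  congr 1
  cases b with
  | inl a =>
    show fop D i (X1 D a) = eop (negD D) i (X1 (negD D) a)
    rw [fop_X1]
    refine Eq.trans ?_ (eop_X1 (negD D) i a).symm
    by_cases h : (a : E) - D.simple i ∈ D.R
    · have h' : (a : E) + (negD D).simple i ∈ (negD D).R := by
        show (a : E) + -D.simple i ∈ D.R
        rwa [← sub_eq_add_neg]
      rw [dif_pos h, dif_pos h']
      show ((D.p i (a : E) : ℚ) + 1) • X1 D ⟨(a : E) - D.simple i, h⟩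
        = ((D.p i (a : E) : ℚ) + 1) • X1 D ⟨(a : E) + -D.simple i, h'⟩
      congr 1
      exact D.X1_congr h h' (sub_eq_add_neg _ _)
    · have h' : ¬((a : E) + (negD D).simple i ∈ (negD D).R) := by
        show ¬((a : E) + -D.simple i ∈ D.R)
        rwa [← sub_eq_add_neg]
      rw [dif_neg h, dif_neg h']
      have hiff : ((a : E) = -(negD D).simple i) ↔ ((a : E) = D.simple i) := by
        show ((a : E) = -(-D.simple i)) ↔ _
        rw [neg_neg]
      by_cases h2 : (a : E) = D.simple i
      · rw [if_pos h2, if_pos (hiff.mpr h2)]; rfl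
      · rw [if_neg h2, if_neg (fun hc => h2 (hiff.mp hc))]
        rfl
  | inr j =>
    show fop D i (t1 D j) = eop (negD D) i (t1 (negD D) j)
    rw [fop_t1, eop_t1]
    show ((|D.pair (D.simple j) (D.simple i)| : ℤ) : ℚ)
          • X1 D ⟨-(D.simple i), D.neg_mem _ (D.simple_mem i)⟩
        = ((|D.pair (-(-D.simple j)) (-(-D.simple i))| : ℤ) : ℚ)
          • X1 D ⟨-D.simple i, (negD D).simple_mem i⟩
    rw [neg_neg, neg_neg]

lemma expF_eq (z : ℚ) : expF D i z = expE (negD D) i z := by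
  rw [expF, expE, fop_eq]
  rfl

end RootSystemData

open Classical in
/-- `exp(z·e_i)` and `exp(z·f_i)` are linear automorphisms of `V₁` and act on
the basis by the explicit formulas of Lusztig's 2.2. -/
theorem stmt18 {E : Type} [NormedAddCommGroup E] [InnerProductSpace ℝ E]
    [FiniteDimensional ℝ E] {I : Type} [Fintype I]
    (D : RootSystemData E I) (i : I) (z : ℚ) :
    Function.Bijective (expE D i z) ∧
    Function.Bijective (expF D i z) ∧
    (∀ a : {x : E // x ∈ D.R}, (∀ r : ℝ, (a : E) ≠ r • D.simple i) →
      expE D i z (X1 D a)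
        = ∑ k ∈ Finset.range (D.p i (a : E) + 1),
            ((((D.q i (a : E) + k).factorial /
                ((D.q i (a : E)).factorial * k.factorial) : ℕ) : ℚ) * z ^ k) •
              (if h : (a : E) + (k : ℝ) • D.simple i ∈ D.R then
                X1 D ⟨(a : E) + (k : ℝ) • D.simple i, h⟩ else 0)) ∧
    (expE D i z (X1 D ⟨D.simple i, D.simple_mem i⟩)
        = X1 D ⟨D.simple i, D.simple_mem i⟩) ∧
    (expE D i z (X1 D ⟨-(D.simple i), D.neg_mem (D.simple i) (D.simple_mem i)⟩)
        = X1 D ⟨-(D.simple i), D.neg_mem (D.simple i) (D.simple_mem i)⟩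
          + z • t1 D i + z ^ 2 • X1 D ⟨D.simple i, D.simple_mem i⟩) ∧
    (∀ j : I, expE D i z (t1 D j)
        = t1 D j + (((|D.pair (D.simple j) (D.simple i)| : ℤ) : ℚ) * z) •
            X1 D ⟨D.simple i, D.simple_mem i⟩) ∧
    (∀ a : {x : E // x ∈ D.R}, (∀ r : ℝ, (a : E) ≠ r • D.simple i) →
      expF D i z (X1 D a)
        = ∑ k ∈ Finset.range (D.q i (a : E) + 1),
            ((((D.p i (a : E) + k).factorial /
                ((D.p i (a : E)).factorial * k.factorial) : ℕ) : ℚ) * z ^ k) •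
              (if h : (a : E) - (k : ℝ) • D.simple i ∈ D.R then
                X1 D ⟨(a : E) - (k : ℝ) • D.simple i, h⟩ else 0)) ∧
    (expF D i z (X1 D ⟨-(D.simple i), D.neg_mem (D.simple i) (D.simple_mem i)⟩)
        = X1 D ⟨-(D.simple i), D.neg_mem (D.simple i) (D.simple_mem i)⟩) ∧
    (expF D i z (X1 D ⟨D.simple i, D.simple_mem i⟩)
        = X1 D ⟨D.simple i, D.simple_mem i⟩
          + z • t1 D i
          + z ^ 2 • X1 D ⟨-(D.simple i), D.neg_mem (D.simple i) (D.simple_mem i)⟩) ∧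
    (∀ j : I, expF D i z (t1 D j)
        = t1 D j + (((|D.pair (D.simple j) (D.simple i)| : ℤ) : ℚ) * z) •
            X1 D ⟨-(D.simple i), D.neg_mem (D.simple i) (D.simple_mem i)⟩) := by
  classical
  refine ⟨D.expE_bijective i z, ?_, ?_, ?_, ?_, ?_, ?_, ?_, ?_, ?_⟩
  · rw [D.expF_eq i z]
    exact (negD D).expE_bijective i z
  · intro a hnp
    exact D.expE_X_notProp i z a.2 hnp
  · exact D.expE_X_simple i z
  · exact D.expE_X_negsimple i z
  · exact fun j => D.expE_t1 i z j
  · intro a hnp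
    have hnp' : ∀ r : ℝ, (a : E) ≠ r • (negD D).simple i := by
      intro r h
      rw [show r • (negD D).simple i = (-r) • D.simple i by
        rw [show (negD D).simple i = -D.simple i from rfl, smul_neg, neg_smul]] at h
      exact hnp (-r) h
    have h := (negD D).expE_X_notProp i z (α := (a : E)) a.2 hnp'
    rw [D.expF_eq i z, show X1 D a = X1 (negD D) ⟨(a : E), a.2⟩ from rfl]
    refine h.trans ?_
    refine Finset.sum_congr rfl fun k hk => ?_
    have he : (a : E) + (k : ℝ) • (negD D).simple i
        = (a : E) - (k : ℝ) • D.simple i := by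
      rw [show (negD D).simple i = -D.simple i from rfl, smul_neg, ← sub_eq_add_neg]
    have hd : (if h : (a : E) + (k : ℝ) • (negD D).simple i ∈ (negD D).R then
          X1 (negD D) ⟨(a : E) + (k : ℝ) • (negD D).simple i, h⟩ else 0)
        = (if h : (a : E) - (k : ℝ) • D.simple i ∈ D.R then
          X1 D ⟨(a : E) - (k : ℝ) • D.simple i, h⟩ else 0) := by
      by_cases hmem : (a : E) - (k : ℝ) • D.simple i ∈ D.R
      · rw [dif_pos hmem, dif_pos (show (a : E) + (k : ℝ) • (negD D).simple i ∈ (negD D).R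
            by rw [he]; exact hmem)]
        exact (negD D).X1_congr _ hmem he
      · rw [dif_neg hmem, dif_neg (show ¬((a : E) + (k : ℝ) • (negD D).simple i ∈ (negD D).R)
            by rw [he]; exact hmem)]
        rfl
    rw [hd]
    rfl
  · rw [D.expF_eq i z]
    exact (negD D).expE_X_simple i z
  · rw [D.expF_eq i z]
    have h := (negD D).expE_X_negsimple i z
    have hc : X1 (negD D) ⟨-(negD D).simple i, (negD D).neg_mem _ ((negD D).simple_mem i)⟩
        = X1 (negD D) ⟨D.simple i, D.simple_mem i⟩ :=
      (negD D).X1_congr _ _ (neg_neg _)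
    rw [hc] at h
    exact h
  · intro j
    rw [D.expF_eq i z]
    have h := (negD D).expE_t1 i z j
    rw [show (negD D).pair ((negD D).simple j) ((negD D).simple i)
        = D.pair (D.simple j) (D.simple i) by
      show D.pair (-(-D.simple j)) (-(-D.simple i)) = _
      rw [neg_neg, neg_neg]] at h
    exact h
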